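/- Fix real numbers a < b and constants A, B, c, M > 0. Suppose that for all n ≥ 1: |K_n(x,y)| ≤ A/(|x−y| + 1/n) and |K_n^{(0,1)}(x,y)| ≤ A n/(|x−y| + 1/n) for all x, y ∈ [a,b]; K_n(x,x) ≥ B n and |K_n^{(0,1)}(x,x)| ≤ M n K_n(x,x) for all x ∈ [a,b]; and v_n(t) ≥ c for all t ∈ [na, nb]. Then there is a constant C > 0, depending only on A, B, c, M, such that for all n ≥ 1 and all s, t ∈ [na, nb], |r̃'_n(s,t)| ≤ C/(|s−t| + 1). -/

import Mathlib

set_option autoImplicit false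

open MeasureTheory Real Set

/-- `Kder p n l m x y = ∑_{j=0}^n p_j^{(l)}(x) p_j^{(m)}(y)`. -/
noncomputable def Kder (p : ℕ → Polynomial ℝ) (n l m : ℕ) (x y : ℝ) : ℝ :=
  ∑ j ∈ Finset.range (n + 1),
    (Polynomial.derivative^[l] (p j)).eval x * (Polynomial.derivative^[m] (p j)).eval y

/-- `v_n(t)`. -/
noncomputable def vFun (p : ℕ → Polynomial ℝ) (n : ℕ) (t : ℝ) : ℝ :=
  Real.sqrt ((1 / (n : ℝ) ^ 2) * (Kder p n 1 1 (t / n) (t / n) / Kder p n 0 0 (t / n) (t / n))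
    - (1 / (n : ℝ) ^ 2) * (Kder p n 0 1 (t / n) (t / n) / Kder p n 0 0 (t / n) (t / n)) ^ 2)

/-- `r̃'_n(s,t)`. -/
noncomputable def rtil' (p : ℕ → Polynomial ℝ) (n : ℕ) (s t : ℝ) : ℝ :=
  (1 / (vFun p n t * Real.sqrt (Kder p n 0 0 (s / n) (s / n) * Kder p n 0 0 (t / n) (t / n)))) *
    (Kder p n 0 1 (s / n) (t / n) / n
      - Kder p n 0 1 (t / n) (t / n) * Kder p n 0 0 (s / n) (t / n)
          / (n * Kder p n 0 0 (t / n) (t / n)))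

theorem rtil'_decay (a b : ℝ) (hab : a < b) (A B c M : ℝ)
    (hA : 0 < A) (hB : 0 < B) (hc : 0 < c) (hM : 0 < M)
    (p : ℕ → Polynomial ℝ)
    (hK00 : ∀ n : ℕ, 1 ≤ n → ∀ x ∈ Set.Icc a b, ∀ y ∈ Set.Icc a b,
      |Kder p n 0 0 x y| ≤ A / (|x - y| + 1 / n))
    (hK01 : ∀ n : ℕ, 1 ≤ n → ∀ x ∈ Set.Icc a b, ∀ y ∈ Set.Icc a b,
      |Kder p n 0 1 x y| ≤ A * n / (|x - y| + 1 / n))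
    (hKdiag : ∀ n : ℕ, 1 ≤ n → ∀ x ∈ Set.Icc a b, Kder p n 0 0 x x ≥ B * n)
    (hK01diag : ∀ n : ℕ, 1 ≤ n → ∀ x ∈ Set.Icc a b,
      |Kder p n 0 1 x x| ≤ M * n * Kder p n 0 0 x x)
    (hv : ∀ n : ℕ, 1 ≤ n → ∀ t ∈ Set.Icc ((n : ℝ) * a) ((n : ℝ) * b), c ≤ vFun p n t) :
    ∃ C : ℝ, 0 < C ∧ ∀ n : ℕ, 1 ≤ n → ∀ s ∈ Set.Icc ((n : ℝ) * a) ((n : ℝ) * b),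
      ∀ t ∈ Set.Icc ((n : ℝ) * a) ((n : ℝ) * b),
        |rtil' p n s t| ≤ C / (|s - t| + 1) := by
  refine ⟨A * (1 + M) / (c * B), by positivity, ?_⟩
  intro n hn s hs t ht
  have hn0 : (0:ℝ) < n := by exact_mod_cast hn
  have hx : s / (n:ℝ) ∈ Set.Icc a b := by
    constructor
    · rw [le_div_iff₀ hn0]; nlinarith [hs.1]
    · rw [div_le_iff₀ hn0]; nlinarith [hs.2]
  have hy : t / (n:ℝ) ∈ Set.Icc a b := by
    constructor
    · rw [le_div_iff₀ hn0]; nlinarith [ht.1]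
    · rw [div_le_iff₀ hn0]; nlinarith [ht.2]
  rw [rtil']
  set x := s / (n:ℝ) with hxdef
  set y := t / (n:ℝ) with hydef
  have hDpos : (0:ℝ) < |s - t| + 1 := by positivity
  have hD : |x - y| + 1 / n = (|s - t| + 1) / n := by
    rw [hxdef, hydef, div_sub_div_same, abs_div, abs_of_pos hn0]
    field_simp
  have hKxx := hKdiag n hn x hx
  have hKyy := hKdiag n hn y hy
  have hKyypos : 0 < Kder p n 0 0 y y := lt_of_lt_of_le (by positivity) hKyy
  have hKxxpos : 0 < Kder p n 0 0 x x := lt_of_lt_of_le (by positivity) hKxx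
  have hvt := hv n hn t ht
  have hvpos : 0 < vFun p n t := lt_of_lt_of_le hc hvt
  have hsq : B * n ≤ Real.sqrt (Kder p n 0 0 x x * Kder p n 0 0 y y) := by
    have hmul : (B*n)*(B*n) ≤ Kder p n 0 0 x x * Kder p n 0 0 y y :=
      mul_le_mul hKxx hKyy (by positivity) hKxxpos.le
    calc B*n = Real.sqrt ((B*n)*(B*n)) := (Real.sqrt_mul_self (by positivity)).symm
      _ ≤ _ := Real.sqrt_le_sqrt hmul
  have hsqpos : 0 < Real.sqrt (Kder p n 0 0 x x * Kder p n 0 0 y y) :=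
    lt_of_lt_of_le (by positivity) hsq
  have hK01xy := hK01 n hn x hx y hy
  have hK00xy := hK00 n hn x hx y hy
  have hK01yy := hK01diag n hn y hy
  rw [hD, div_div_eq_mul_div] at hK01xy hK00xy
  -- hK01xy : |K01 x y| ≤ A * n * n / (|s-t|+1)
  -- hK00xy : |K00 x y| ≤ A * n / (|s-t|+1)
  have h1 : |Kder p n 0 1 x y / n| ≤ A * n / (|s - t| + 1) := by
    rw [abs_div, abs_of_pos hn0]
    have heq : A * n * n / (|s - t| + 1) / n = A * n / (|s - t| + 1) := by
      field_simp
    calc |Kder p n 0 1 x y| / n ≤ A * n * n / (|s - t| + 1) / n :=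
          (div_le_div_iff_of_pos_right hn0).mpr hK01xy
      _ = _ := heq
  have h2 : |Kder p n 0 1 y y * Kder p n 0 0 x y / (n * Kder p n 0 0 y y)|
      ≤ M * A * n / (|s - t| + 1) := by
    have hden : (0:ℝ) < n * Kder p n 0 0 y y := by positivity
    rw [abs_div, abs_of_pos hden, abs_mul, div_le_div_iff₀ hden hDpos]
    have hK00xy' : |Kder p n 0 0 x y| * (|s - t| + 1) ≤ A * n :=
      (le_div_iff₀ hDpos).mp hK00xy
    nlinarith [mul_le_mul_of_nonneg_right hK01yy
        (mul_nonneg (abs_nonneg (Kder p n 0 0 x y)) hDpos.le),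
      mul_le_mul_of_nonneg_left hK00xy'
        (by positivity : (0:ℝ) ≤ M * n * Kder p n 0 0 y y)]
  have hE : |Kder p n 0 1 x y / n
      - Kder p n 0 1 y y * Kder p n 0 0 x y / (n * Kder p n 0 0 y y)|
      ≤ A * (1 + M) * n / (|s - t| + 1) := by
    calc |Kder p n 0 1 x y / n
        - Kder p n 0 1 y y * Kder p n 0 0 x y / (n * Kder p n 0 0 y y)|
        ≤ |Kder p n 0 1 x y / n|
          + |Kder p n 0 1 y y * Kder p n 0 0 x y / (n * Kder p n 0 0 y y)| := abs_sub _ _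
      _ ≤ A * n / (|s - t| + 1) + M * A * n / (|s - t| + 1) := add_le_add h1 h2
      _ = A * (1 + M) * n / (|s - t| + 1) := by ring
  have hvsq : 0 < vFun p n t * Real.sqrt (Kder p n 0 0 x x * Kder p n 0 0 y y) :=
    mul_pos hvpos hsqpos
  rw [abs_mul, abs_of_pos (one_div_pos.mpr hvsq), one_div_mul_eq_div]
  have hcbn : c * (B * n) ≤ vFun p n t * Real.sqrt (Kder p n 0 0 x x * Kder p n 0 0 y y) :=
    mul_le_mul hvt hsq (by positivity) hvpos.le
  calc |Kder p n 0 1 x y / n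
        - Kder p n 0 1 y y * Kder p n 0 0 x y / (n * Kder p n 0 0 y y)|
        / (vFun p n t * Real.sqrt (Kder p n 0 0 x x * Kder p n 0 0 y y))
      ≤ (A * (1 + M) * n / (|s - t| + 1)) / (c * (B * n)) :=
        div_le_div₀ (by positivity) hE (by positivity) hcbn
    _ = A * (1 + M) / (c * B) / (|s - t| + 1) := by field_simp
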